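/- Let γ > 0 with γ ≠ 1. Define t̃ = (1−γ)T − γσ²/ν₀² and I = [0,T] if t̃ < 0, I = (t̃,T] otherwise. Define on I×(0,∞)×ℝ the function u(t,V,β) = ((e^{r(T−t)}V)^{1−γ}/(1−γ))·exp[(γ/2)log(γg(t)/((γ−1)g(t)+g(T))) + (1/2)log(g(T)/g(t)) + (1/2)((1−γ)/σ²)(1/g(t))·((g(t)−g(T))/((γ−1)g(t)+g(T)))·(β−r)²]. Then u satisfies, on I×(0,∞)×ℝ, the HJB equation −∂_t u − (1/2)σ²g(t)²∂²_{ββ}u − sup_{θ∈ℝ}{((β−r)θ + r)V∂_V u + (1/2)σ²θ²V²∂²_{VV}u + σ²g(t)θV∂²_{Vβ}u} = 0 with terminal condition u(T,V,β) = V^{1−γ}/(1−γ), and the supremum is attained at θ* = ((β−r)/(γσ²))·γg(T)/((γ−1)g(t) + g(T)). -/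

import Mathlib

noncomputable section

open Set

/-- ∂ₜ for a function u(t,V,β). -/
def updt (u : ℝ → ℝ → ℝ → ℝ) (t V β : ℝ) : ℝ := deriv (fun s => u s V β) t
/-- ∂_V for a function u(t,V,β). -/
def updV (u : ℝ → ℝ → ℝ → ℝ) (t V β : ℝ) : ℝ := deriv (fun x => u t x β) V
/-- ∂_β for a function u(t,V,β). -/
def updb (u : ℝ → ℝ → ℝ → ℝ) (t V β : ℝ) : ℝ := deriv (fun y => u t V y) β
/-- ∂²_{VV} for a function u(t,V,β). -/
def updVV (u : ℝ → ℝ → ℝ → ℝ) (t V β : ℝ) : ℝ := deriv (fun x => updV u t x β) V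
/-- ∂²_{ββ} for a function u(t,V,β). -/
def updbb (u : ℝ → ℝ → ℝ → ℝ) (t V β : ℝ) : ℝ := deriv (fun y => updb u t V y) β
/-- ∂²_{Vβ} for a function u(t,V,β). -/
def updVb (u : ℝ → ℝ → ℝ → ℝ) (t V β : ℝ) : ℝ := deriv (fun y => updV u t V y) β

/-- The quantity inside the supremum of the CRRA HJB equation. -/
def hamTheta (σ r gt : ℝ) (u : ℝ → ℝ → ℝ → ℝ) (t V β θ : ℝ) : ℝ :=
  ((β - r) * θ + r) * V * updV u t V β + (1/2) * σ^2 * θ^2 * V^2 * updVV u t V β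
    + σ^2 * gt * θ * V * updVb u t V β

lemma exp_rpow' (x y : ℝ) : Real.exp x ^ y = Real.exp (x * y) := by
  rw [Real.rpow_def_of_pos (Real.exp_pos x), Real.log_exp]

lemma hasDerivAt_cmul_rpow (K p x : ℝ) (hx : x ≠ 0) :
    HasDerivAt (fun y : ℝ => K * y ^ p) (K * (p * x ^ (p - 1))) x :=
  (Real.hasDerivAt_rpow_const (Or.inl hx)).const_mul K

set_option maxHeartbeats 2000000 in
theorem stmt8
    (T r σ ν₀ γ : ℝ) (hT : 0 < T) (hσ : 0 < σ) (hν : 0 < ν₀)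
    (hγ : 0 < γ) (hγ1 : γ ≠ 1)
    (g : ℝ → ℝ) (hg : ∀ t, g t = ν₀^2 / (σ^2 + ν₀^2 * t))
    (ttil : ℝ) (httil : ttil = (1-γ) * T - γ * σ^2 / ν₀^2)
    (I : Set ℝ) (hI : I = if ttil < 0 then Icc (0:ℝ) T else Ioc ttil T)
    (u : ℝ → ℝ → ℝ → ℝ)
    (hu : ∀ t V β : ℝ, u t V β =
      (Real.exp (r*(T-t)) * V) ^ (1-γ) / (1-γ)
        * Real.exp ((γ/2) * Real.log (γ * g t / ((γ-1) * g t + g T))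
            + (1/2) * Real.log (g T / g t)
            + (1/2) * ((1-γ)/σ^2) * (1/(g t))
                * ((g t - g T) / ((γ-1) * g t + g T)) * (β - r)^2)) :
    (∀ t ∈ I, ∀ V ∈ Ioi (0:ℝ), ∀ β : ℝ,
      -- the supremum in the HJB equation is attained at θ*
      IsGreatest (Set.range (hamTheta σ r (g t) u t V β))
        (hamTheta σ r (g t) u t V β
          ((β - r)/(γ*σ^2) * (γ * g T / ((γ-1) * g t + g T))))
      ∧
      -- the HJB equation holds
      -updt u t V β - (1/2) * σ^2 * (g t)^2 * updbb u t V β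
        - hamTheta σ r (g t) u t V β
            ((β - r)/(γ*σ^2) * (γ * g T / ((γ-1) * g t + g T))) = 0)
    ∧
    -- terminal condition
    (∀ V ∈ Ioi (0:ℝ), ∀ β : ℝ, u T V β = V ^ (1-γ) / (1-γ)) := by
  have hν2 : (0:ℝ) < ν₀^2 := pow_pos hν 2
  have hσ2 : (0:ℝ) < σ^2 := pow_pos hσ 2
  have hσne : σ ≠ 0 := ne_of_gt hσ
  have hγne : γ ≠ 0 := ne_of_gt hγ
  have h1γ : (1:ℝ) - γ ≠ 0 := sub_ne_zero.mpr (Ne.symm hγ1)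
  have hEr : ∀ s x y : ℝ, 0 < x →
      u s x y = Real.exp (r*(T-s)*(1-γ) + ((γ/2) * Real.log (γ * g s / ((γ-1) * g s + g T)) + (1/2) * Real.log (g T / g s) + (1/2) * ((1-γ)/σ^2) * (1/(g s)) * ((g s - g T) / ((γ-1) * g s + g T)) * (y - r)^2)) / (1-γ) * x ^ (1-γ) := by
    intro s x y hx
    rw [hu s x y, Real.mul_rpow (Real.exp_nonneg _) hx.le, exp_rpow']
    simp only [Real.exp_add]
    ring
  constructor
  · intro t ht V hV β
    replace hV : 0 < V := hV
    have hVne : V ≠ 0 := ne_of_gt hV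
    have htlt : ttil < t ∧ 0 ≤ t ∧ t ≤ T := by
      rw [hI] at ht
      by_cases hc : ttil < 0
      · rw [if_pos hc] at ht
        exact ⟨lt_of_lt_of_le hc ht.1, ht.1, ht.2⟩
      · rw [if_neg hc] at ht
        push_neg at hc
        exact ⟨ht.1, le_trans hc ht.1.le, ht.2⟩
    obtain ⟨htt, ht0, htT⟩ := htlt
    have hst : 0 < σ^2 + ν₀^2 * t := by
      have := mul_nonneg hν2.le ht0
      linarith
    have hsT : 0 < σ^2 + ν₀^2 * T := by
      have := mul_nonneg hν2.le hT.le
      linarith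
    have hgt : 0 < g t := by rw [hg]; exact div_pos hν2 hst
    have hgT : 0 < g T := by rw [hg]; exact div_pos hν2 hsT
    have hgtne : g t ≠ 0 := ne_of_gt hgt
    have hD : 0 < (γ-1) * g t + g T := by
      have hkey : (γ-1) * (σ^2+ν₀^2*T) + (σ^2+ν₀^2*t) = ν₀^2 * (t - ttil) := by
        rw [httil]
        field_simp
        ring
      have h2 : (γ-1) * g t + g T
          = ν₀^2 * (ν₀^2 * (t - ttil)) / ((σ^2+ν₀^2*t) * (σ^2+ν₀^2*T)) := by
        rw [hg t, hg T, ← hkey]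
        field_simp
      rw [h2]
      exact div_pos (mul_pos hν2 (mul_pos hν2 (by linarith))) (mul_pos hst hsT)
    have hDne : (γ-1) * g t + g T ≠ 0 := ne_of_gt hD
    -- derivative of g
    have hgd : HasDerivAt g (-(g t)^2) t := by
      have hgfun : g = fun s => ν₀^2 / (σ^2 + ν₀^2 * s) := funext hg
      have h0 : HasDerivAt (fun s : ℝ => σ^2 + ν₀^2 * s) (ν₀^2) t := by
        simpa using (hasDerivAt_id t |>.const_mul (ν₀^2)).const_add (σ^2)
      have h1 := (hasDerivAt_const t (ν₀^2)).fun_div h0 (ne_of_gt hst)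
      have h2 : HasDerivAt (fun s => ν₀^2 / (σ^2 + ν₀^2 * s)) (-(g t)^2) t := by
        refine h1.congr_deriv ?_
        rw [hg]
        field_simp
        ring
      exact h2.congr_of_eventuallyEq (Filter.Eventually.of_forall hg)
    have hden : HasDerivAt (fun s => (γ-1) * g s + g T) ((γ-1) * -(g t)^2) t :=
      (hgd.const_mul (γ-1)).add_const (g T)
    have hF1 : HasDerivAt (fun s => r*(T-s)*(1-γ)) (-(r*(1-γ))) t := by
      have h1 := (((hasDerivAt_const t T).fun_sub (hasDerivAt_id' t)).const_mul r).mul_const (1-γ)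
      refine h1.congr_deriv ?_
      ring
    have hF2 : HasDerivAt (fun s => (γ/2) * Real.log (γ * g s / ((γ-1) * g s + g T)))
        ((γ/2) * (-(g t) + (γ-1)*(g t)^2/((γ-1)*g t + g T))) t := by
      have hq := (hgd.const_mul γ).fun_div hden hDne
      have hl := hq.log (ne_of_gt (div_pos (mul_pos hγ hgt) hD))
      have h1 := hl.const_mul (γ/2)
      refine h1.congr_deriv ?_
      set D := (γ-1) * g t + g T with hDset
      field_simp
      ring
    have hF3 : HasDerivAt (fun s => (1/2) * Real.log (g T / g s)) ((1/2) * g t) t := by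
      have hq := (hasDerivAt_const t (g T)).fun_div hgd hgtne
      have hl := hq.log (ne_of_gt (div_pos hgT hgt))
      have h1 := hl.const_mul (1/2)
      refine h1.congr_deriv ?_
      field_simp
      ring
    have hF4 : HasDerivAt
        (fun s => (1/2) * ((1-γ)/σ^2) * (1/(g s)) * ((g s - g T) / ((γ-1) * g s + g T)) * (β - r)^2)
        ((1/2) * ((1-γ)/σ^2) * ((g t - g T)/((γ-1)*g t + g T) - γ * g T * g t/((γ-1)*g t + g T)^2) * (β-r)^2) t := by
      have hinv := (hasDerivAt_const t (1:ℝ)).fun_div hgd hgtne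
      have hrat := (hgd.sub_const (g T)).fun_div hden hDne
      have h1 := ((hinv.const_mul ((1/2) * ((1-γ)/σ^2))).fun_mul hrat).mul_const ((β-r)^2)
      refine h1.congr_deriv ?_
      field_simp
      ring
    have hEE : HasDerivAt (fun s => r*(T-s)*(1-γ) + ((γ/2) * Real.log (γ * g s / ((γ-1) * g s + g T)) + (1/2) * Real.log (g T / g s) + (1/2) * ((1-γ)/σ^2) * (1/(g s)) * ((g s - g T) / ((γ-1) * g s + g T)) * (β - r)^2)) (-(r*(1-γ)) + ((γ/2) * (-(g t) + (γ-1)*(g t)^2/((γ-1)*g t + g T)) + (1/2) * g t + (1/2) * ((1-γ)/σ^2) * ((g t - g T)/((γ-1)*g t + g T) - γ * g T * g t/((γ-1)*g t + g T)^2) * (β-r)^2)) t :=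
      hF1.add ((hF2.add hF3).add hF4)
    have hut : HasDerivAt (fun s => u s V β)
        (Real.exp (r*(T-t)*(1-γ) + ((γ/2) * Real.log (γ * g t / ((γ-1) * g t + g T)) + (1/2) * Real.log (g T / g t) + (1/2) * ((1-γ)/σ^2) * (1/(g t)) * ((g t - g T) / ((γ-1) * g t + g T)) * (β - r)^2)) * (-(r*(1-γ)) + ((γ/2) * (-(g t) + (γ-1)*(g t)^2/((γ-1)*g t + g T)) + (1/2) * g t + (1/2) * ((1-γ)/σ^2) * ((g t - g T)/((γ-1)*g t + g T) - γ * g T * g t/((γ-1)*g t + g T)^2) * (β-r)^2)) / (1-γ) * V ^ (1-γ)) t := by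
      have hfun : (fun s => u s V β)
          = fun s => Real.exp (r*(T-s)*(1-γ) + ((γ/2) * Real.log (γ * g s / ((γ-1) * g s + g T)) + (1/2) * Real.log (g T / g s) + (1/2) * ((1-γ)/σ^2) * (1/(g s)) * ((g s - g T) / ((γ-1) * g s + g T)) * (β - r)^2)) / (1-γ) * V ^ (1-γ) :=
        funext fun s => hEr s V β hV
      rw [hfun]
      exact (hEE.exp.div_const (1-γ)).mul_const _
    have hupdt : updt u t V β = Real.exp (r*(T-t)*(1-γ) + ((γ/2) * Real.log (γ * g t / ((γ-1) * g t + g T)) + (1/2) * Real.log (g T / g t) + (1/2) * ((1-γ)/σ^2) * (1/(g t)) * ((g t - g T) / ((γ-1) * g t + g T)) * (β - r)^2)) * (-(r*(1-γ)) + ((γ/2) * (-(g t) + (γ-1)*(g t)^2/((γ-1)*g t + g T)) + (1/2) * g t + (1/2) * ((1-γ)/σ^2) * ((g t - g T)/((γ-1)*g t + g T) - γ * g T * g t/((γ-1)*g t + g T)^2) * (β-r)^2)) / (1-γ) * V ^ (1-γ) := by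
      simp only [updt]
      exact hut.deriv
    have hV1 : ∀ y x : ℝ, 0 < x →
        updV u t x y = Real.exp (r*(T-t)*(1-γ) + ((γ/2) * Real.log (γ * g t / ((γ-1) * g t + g T)) + (1/2) * Real.log (g T / g t) + (1/2) * ((1-γ)/σ^2) * (1/(g t)) * ((g t - g T) / ((γ-1) * g t + g T)) * (y - r)^2)) * x ^ (1-γ-1) := by
      intro y x hx
      have heq : (fun z => u t z y) =ᶠ[nhds x]
          fun z => Real.exp (r*(T-t)*(1-γ) + ((γ/2) * Real.log (γ * g t / ((γ-1) * g t + g T)) + (1/2) * Real.log (g T / g t) + (1/2) * ((1-γ)/σ^2) * (1/(g t)) * ((g t - g T) / ((γ-1) * g t + g T)) * (y - r)^2)) / (1-γ) * z ^ (1-γ) := by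
        filter_upwards [Ioi_mem_nhds hx] with z hz
        exact hEr t z y hz
      simp only [updV]
      rw [heq.deriv_eq,
        (hasDerivAt_cmul_rpow (Real.exp (r*(T-t)*(1-γ) + ((γ/2) * Real.log (γ * g t / ((γ-1) * g t + g T)) + (1/2) * Real.log (g T / g t) + (1/2) * ((1-γ)/σ^2) * (1/(g t)) * ((g t - g T) / ((γ-1) * g t + g T)) * (y - r)^2)) / (1-γ)) (1-γ) x (ne_of_gt hx)).deriv]
      field_simp
    have hupdV : updV u t V β = Real.exp (r*(T-t)*(1-γ) + ((γ/2) * Real.log (γ * g t / ((γ-1) * g t + g T)) + (1/2) * Real.log (g T / g t) + (1/2) * ((1-γ)/σ^2) * (1/(g t)) * ((g t - g T) / ((γ-1) * g t + g T)) * (β - r)^2)) * V ^ (1-γ-1) := hV1 β V hV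
    have hupdVV : updVV u t V β = Real.exp (r*(T-t)*(1-γ) + ((γ/2) * Real.log (γ * g t / ((γ-1) * g t + g T)) + (1/2) * Real.log (g T / g t) + (1/2) * ((1-γ)/σ^2) * (1/(g t)) * ((g t - g T) / ((γ-1) * g t + g T)) * (β - r)^2)) * ((1-γ-1) * V ^ (1-γ-1-1)) := by
      have heq : (fun x => updV u t x β) =ᶠ[nhds V]
          fun x => Real.exp (r*(T-t)*(1-γ) + ((γ/2) * Real.log (γ * g t / ((γ-1) * g t + g T)) + (1/2) * Real.log (g T / g t) + (1/2) * ((1-γ)/σ^2) * (1/(g t)) * ((g t - g T) / ((γ-1) * g t + g T)) * (β - r)^2)) * x ^ (1-γ-1) := by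
        filter_upwards [Ioi_mem_nhds hV] with z hz
        exact hV1 β z hz
      simp only [updVV]
      rw [heq.deriv_eq,
        (hasDerivAt_cmul_rpow (Real.exp (r*(T-t)*(1-γ) + ((γ/2) * Real.log (γ * g t / ((γ-1) * g t + g T)) + (1/2) * Real.log (g T / g t) + (1/2) * ((1-γ)/σ^2) * (1/(g t)) * ((g t - g T) / ((γ-1) * g t + g T)) * (β - r)^2))) (1-γ-1) V hVne).deriv]
    have hEy : ∀ y : ℝ, HasDerivAt (fun y' => r*(T-t)*(1-γ) + ((γ/2) * Real.log (γ * g t / ((γ-1) * g t + g T)) + (1/2) * Real.log (g T / g t) + (1/2) * ((1-γ)/σ^2) * (1/(g t)) * ((g t - g T) / ((γ-1) * g t + g T)) * (y' - r)^2))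
        (2 * ((1/2) * ((1-γ)/σ^2) * (1/(g t)) * ((g t - g T) / ((γ-1) * g t + g T))) * (y - r)) y := by
      intro y
      have h1 : HasDerivAt (fun y' : ℝ => (y' - r)^2) (2*(y-r)) y := by
        simpa using ((hasDerivAt_id' y).sub_const r).fun_pow 2
      have h2 := (h1.const_mul ((1/2) * ((1-γ)/σ^2) * (1/(g t)) * ((g t - g T) / ((γ-1) * g t + g T)))).const_add
        ((γ/2) * Real.log (γ * g t / ((γ-1) * g t + g T)) + (1/2) * Real.log (g T / g t))
      have h3 := h2.const_add (r*(T-t)*(1-γ))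
      refine h3.congr_deriv ?_
      ring
    have hupdVb : updVb u t V β = Real.exp (r*(T-t)*(1-γ) + ((γ/2) * Real.log (γ * g t / ((γ-1) * g t + g T)) + (1/2) * Real.log (g T / g t) + (1/2) * ((1-γ)/σ^2) * (1/(g t)) * ((g t - g T) / ((γ-1) * g t + g T)) * (β - r)^2)) * V ^ (1-γ-1) * (2 * ((1/2) * ((1-γ)/σ^2) * (1/(g t)) * ((g t - g T) / ((γ-1) * g t + g T))) * (β - r)) := by
      have hfun : (fun y => updV u t V y)
          = fun y => Real.exp (r*(T-t)*(1-γ) + ((γ/2) * Real.log (γ * g t / ((γ-1) * g t + g T)) + (1/2) * Real.log (g T / g t) + (1/2) * ((1-γ)/σ^2) * (1/(g t)) * ((g t - g T) / ((γ-1) * g t + g T)) * (y - r)^2)) * V ^ (1-γ-1) :=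
        funext fun y => hV1 y V hV
      simp only [updVb]
      rw [hfun, ((hEy β).exp.mul_const (V ^ (1-γ-1))).deriv]
      ring
    have hb1 : ∀ y : ℝ, updb u t V y
        = Real.exp (r*(T-t)*(1-γ) + ((γ/2) * Real.log (γ * g t / ((γ-1) * g t + g T)) + (1/2) * Real.log (g T / g t) + (1/2) * ((1-γ)/σ^2) * (1/(g t)) * ((g t - g T) / ((γ-1) * g t + g T)) * (y - r)^2)) / (1-γ) * V ^ (1-γ) * (2 * ((1/2) * ((1-γ)/σ^2) * (1/(g t)) * ((g t - g T) / ((γ-1) * g t + g T))) * (y - r)) := by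
      intro y
      have hfun : (fun y' => u t V y')
          = fun y' => Real.exp (r*(T-t)*(1-γ) + ((γ/2) * Real.log (γ * g t / ((γ-1) * g t + g T)) + (1/2) * Real.log (g T / g t) + (1/2) * ((1-γ)/σ^2) * (1/(g t)) * ((g t - g T) / ((γ-1) * g t + g T)) * (y' - r)^2)) / (1-γ) * V ^ (1-γ) :=
        funext fun y' => hEr t V y' hV
      simp only [updb]
      rw [hfun, (((hEy y).exp.div_const (1-γ)).mul_const (V ^ (1-γ))).deriv]
      ring
    have hupdbb : updbb u t V β
        = Real.exp (r*(T-t)*(1-γ) + ((γ/2) * Real.log (γ * g t / ((γ-1) * g t + g T)) + (1/2) * Real.log (g T / g t) + (1/2) * ((1-γ)/σ^2) * (1/(g t)) * ((g t - g T) / ((γ-1) * g t + g T)) * (β - r)^2)) / (1-γ) * V ^ (1-γ) * (4 * ((1/2) * ((1-γ)/σ^2) * (1/(g t)) * ((g t - g T) / ((γ-1) * g t + g T)))^2 * (β-r)^2 + 2 * ((1/2) * ((1-γ)/σ^2) * (1/(g t)) * ((g t - g T) / ((γ-1) * g t + g T)))) := by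
      have hfun : (fun y => updb u t V y)
          = fun y => Real.exp (r*(T-t)*(1-γ) + ((γ/2) * Real.log (γ * g t / ((γ-1) * g t + g T)) + (1/2) * Real.log (g T / g t) + (1/2) * ((1-γ)/σ^2) * (1/(g t)) * ((g t - g T) / ((γ-1) * g t + g T)) * (y - r)^2)) / (1-γ) * V ^ (1-γ) * (2 * ((1/2) * ((1-γ)/σ^2) * (1/(g t)) * ((g t - g T) / ((γ-1) * g t + g T))) * (y - r)) :=
        funext hb1
      simp only [updbb]
      rw [hfun, ((((hEy β).exp.div_const (1-γ)).mul_const (V ^ (1-γ))).fun_mul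
        (((hasDerivAt_id' β).sub_const r).const_mul (2 * ((1/2) * ((1-γ)/σ^2) * (1/(g t)) * ((g t - g T) / ((γ-1) * g t + g T)))))).deriv]
      ring
    have hE : 0 < Real.exp (r*(T-t)*(1-γ) + ((γ/2) * Real.log (γ * g t / ((γ-1) * g t + g T)) + (1/2) * Real.log (g T / g t) + (1/2) * ((1-γ)/σ^2) * (1/(g t)) * ((g t - g T) / ((γ-1) * g t + g T)) * (β - r)^2)) := Real.exp_pos _
    have hW : 0 < V ^ (1-γ-1-1) := Real.rpow_pos_of_pos hV _
    have hVpow1 : V ^ (1-γ-1) = V ^ (1-γ-1-1) * V := by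
      rw [← Real.rpow_add_one hVne]
      congr 1
      ring
    have hVpow0 : V ^ (1-γ) = V ^ (1-γ-1-1) * V * V := by
      rw [← Real.rpow_add_one hVne, ← Real.rpow_add_one hVne]
      congr 1
      ring
    refine ⟨⟨Set.mem_range_self _, ?_⟩, ?_⟩
    · rintro x ⟨θ, rfl⟩
      have key : hamTheta σ r (g t) u t V β ((β - r)/(γ*σ^2) * (γ * g T / ((γ-1) * g t + g T))) - hamTheta σ r (g t) u t V β θ
          = (1/2) * σ^2 * γ * (Real.exp (r*(T-t)*(1-γ) + ((γ/2) * Real.log (γ * g t / ((γ-1) * g t + g T)) + (1/2) * Real.log (g T / g t) + (1/2) * ((1-γ)/σ^2) * (1/(g t)) * ((g t - g T) / ((γ-1) * g t + g T)) * (β - r)^2)) * V ^ (1-γ-1-1)) * V^2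
            * (θ - ((β - r)/(γ*σ^2) * (γ * g T / ((γ-1) * g t + g T))))^2 := by
        simp only [hamTheta]
        rw [hupdV, hupdVV, hupdVb, hVpow1]
        set E := Real.exp (r*(T-t)*(1-γ) + ((γ/2) * Real.log (γ * g t / ((γ-1) * g t + g T)) + (1/2) * Real.log (g T / g t) + (1/2) * ((1-γ)/σ^2) * (1/(g t)) * ((g t - g T) / ((γ-1) * g t + g T)) * (β - r)^2)) with hEset
        set W := V ^ (1-γ-1-1) with hWset
        field_simp
        ring
      have h4 : 0 ≤ (1/2) * σ^2 * γ * (Real.exp (r*(T-t)*(1-γ) + ((γ/2) * Real.log (γ * g t / ((γ-1) * g t + g T)) + (1/2) * Real.log (g T / g t) + (1/2) * ((1-γ)/σ^2) * (1/(g t)) * ((g t - g T) / ((γ-1) * g t + g T)) * (β - r)^2)) * V ^ (1-γ-1-1)) * V^2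
            * (θ - ((β - r)/(γ*σ^2) * (γ * g T / ((γ-1) * g t + g T))))^2 :=
        mul_nonneg (mul_nonneg (mul_nonneg (mul_nonneg (mul_nonneg (by norm_num) hσ2.le)
          hγ.le) (mul_pos hE hW).le) (sq_nonneg V)) (sq_nonneg _)
      linarith [key, h4]
    · simp only [hamTheta]
      rw [hupdt, hupdbb, hupdV, hupdVV, hupdVb, hVpow1, hVpow0]
      set E := Real.exp (r*(T-t)*(1-γ) + ((γ/2) * Real.log (γ * g t / ((γ-1) * g t + g T)) + (1/2) * Real.log (g T / g t) + (1/2) * ((1-γ)/σ^2) * (1/(g t)) * ((g t - g T) / ((γ-1) * g t + g T)) * (β - r)^2)) with hEset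
      set W := V ^ (1-γ-1-1) with hWset
      set D := (γ-1) * g t + g T with hDset
      field_simp
      ring
  · intro V hV β
    have hsT : 0 < σ^2 + ν₀^2 * T := by
      have := mul_pos hν2 hT
      linarith
    have hgT : 0 < g T := by rw [hg]; exact div_pos hν2 hsT
    rw [hu, show (γ-1) * g T + g T = γ * g T from by ring,
      div_self (ne_of_gt (mul_pos hγ hgT)), div_self (ne_of_gt hgT), Real.log_one]
    simp
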